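/- Let ν be a real number with 1 < ν ≤ 3^{1/4}, let t ≥ 2 be an integer, and suppose d₁ and d₂ are positive divisors of t with √t/ν ≤ d₁ ≤ √t and √t/ν ≤ d₂ ≤ √t. Then gcd(d₁, d₂) > 1. -/
import Mathlib


/-- If `1 < ν ≤ 3^{1/4}`, `t ≥ 2`, and `d₁, d₂` are positive divisors of `t` lying in
the interval `[√t/ν, √t]`, then `gcd(d₁, d₂) > 1`. -/
theorem stmt8 (ν : ℝ) (hν1 : 1 < ν) (hν2 : ν ≤ (3 : ℝ) ^ ((1 : ℝ)/4))
    (t : ℕ) (ht : 2 ≤ t) (d₁ d₂ : ℕ) (hd₁pos : 0 < d₁) (hd₂pos : 0 < d₂)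
    (hd₁ : d₁ ∣ t) (hd₂ : d₂ ∣ t)
    (hl₁ : Real.sqrt t / ν ≤ (d₁ : ℝ)) (hu₁ : (d₁ : ℝ) ≤ Real.sqrt t)
    (hl₂ : Real.sqrt t / ν ≤ (d₂ : ℝ)) (hu₂ : (d₂ : ℝ) ≤ Real.sqrt t) :
    1 < Nat.gcd d₁ d₂ := by
  by_contra h
  push_neg at h
  have hcop : Nat.Coprime d₁ d₂ := by
    have : 0 < Nat.gcd d₁ d₂ := Nat.gcd_pos_of_pos_left _ hd₁pos
    omega
  have hmul : d₁ * d₂ ∣ t := Nat.Coprime.mul_dvd_of_dvd_of_dvd hcop hd₁ hd₂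
  have hν0 : (0:ℝ) < ν := lt_trans one_pos hν1
  have ht0 : (0:ℝ) ≤ (t:ℝ) := by positivity
  have hst : Real.sqrt t * Real.sqrt t = (t:ℝ) := Real.mul_self_sqrt ht0
  -- ν^2 < 2
  have hν2' : ν ^ 2 ≤ Real.sqrt 3 := by
    have h3 : ((3:ℝ) ^ ((1:ℝ)/4)) ^ 2 = Real.sqrt 3 := by
      rw [← Real.rpow_natCast ((3:ℝ) ^ ((1:ℝ)/4)) 2, ← Real.rpow_mul (by norm_num),
        Real.sqrt_eq_rpow]
      norm_num
    calc ν ^ 2 ≤ ((3:ℝ) ^ ((1:ℝ)/4)) ^ 2 := by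
          apply pow_le_pow_left₀ (le_of_lt hν0) hν2
      _ = Real.sqrt 3 := h3
  have hνsq : ν ^ 2 < 2 := by
    refine lt_of_le_of_lt hν2' ?_
    have : Real.sqrt 3 < Real.sqrt 4 := by
      apply Real.sqrt_lt_sqrt <;> norm_num
    have h4 : Real.sqrt 4 = 2 := by
      rw [show (4:ℝ) = 2^2 by norm_num, Real.sqrt_sq (by norm_num)]
    linarith
  -- t / ν^2 ≤ d₁ d₂
  have hlow : (t:ℝ) / ν ^ 2 ≤ (d₁:ℝ) * d₂ := by
    have h1 : Real.sqrt t / ν * (Real.sqrt t / ν) ≤ (d₁:ℝ) * d₂ := by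
      apply mul_le_mul hl₁ hl₂ (by positivity) (by positivity)
    have h2 : Real.sqrt t / ν * (Real.sqrt t / ν) = (t:ℝ) / ν ^ 2 := by
      rw [div_mul_div_comm, hst, ← sq]
    linarith
  -- t < 2 * d₁ * d₂
  have ht2 : (t:ℝ) < 2 * ((d₁:ℝ) * d₂) := by
    have htpos : (0:ℝ) < (t:ℝ) := by exact_mod_cast lt_of_lt_of_le two_pos ht
    have : (t:ℝ) / 2 < (t:ℝ) / ν ^ 2 := by
      apply div_lt_div_of_pos_left htpos (by positivity) hνsq
    linarith
  have htnat : t < 2 * (d₁ * d₂) := by exact_mod_cast (by push_cast; linarith : (t:ℝ) < ((2 * (d₁*d₂) : ℕ) : ℝ))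
  -- so t = d₁ * d₂
  obtain ⟨k, hk⟩ := hmul
  have hdd0 : 0 < d₁ * d₂ := Nat.mul_pos hd₁pos hd₂pos
  have hk1 : k = 1 := by
    rcases Nat.lt_or_ge k 2 with hk2 | hk2
    · have hk0 : k ≠ 0 := by rintro rfl; simp at hk; omega
      omega
    · exfalso
      have : 2 * (d₁ * d₂) ≤ t := by
        calc 2 * (d₁ * d₂) ≤ k * (d₁ * d₂) := Nat.mul_le_mul_right _ hk2
          _ = t := by rw [hk]; ring
      omega
  have hteq : t = d₁ * d₂ := by rw [hk, hk1, mul_one]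
  -- then d₁ = √t = d₂
  have heq : (d₁:ℝ) = Real.sqrt t ∧ (d₂:ℝ) = Real.sqrt t := by
    constructor
    · by_contra hne
      have h1 : (d₁:ℝ) < Real.sqrt t := lt_of_le_of_ne hu₁ hne
      have hd2r : (0:ℝ) < (d₂:ℝ) := by exact_mod_cast hd₂pos
      have h2 : (d₁:ℝ) * d₂ < (t:ℝ) := by nlinarith [Real.sqrt_nonneg (t:ℝ)]
      have : (t:ℝ) = (d₁:ℝ) * d₂ := by exact_mod_cast congrArg (Nat.cast : ℕ → ℝ) hteq
      linarith
    · by_contra hne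
      have h1 : (d₂:ℝ) < Real.sqrt t := lt_of_le_of_ne hu₂ hne
      have hd1r : (0:ℝ) < (d₁:ℝ) := by exact_mod_cast hd₁pos
      have h2 : (d₁:ℝ) * d₂ < (t:ℝ) := by nlinarith [Real.sqrt_nonneg (t:ℝ)]
      have : (t:ℝ) = (d₁:ℝ) * d₂ := by exact_mod_cast congrArg (Nat.cast : ℕ → ℝ) hteq
      linarith
  have hdd : d₁ = d₂ := by
    have : (d₁:ℝ) = (d₂:ℝ) := by rw [heq.1, heq.2]
    exact_mod_cast this
  have : d₁ = 1 := by
    have hc := hcop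
    rw [hdd] at hc
    have := Nat.Coprime.gcd_eq_one hc
    rw [Nat.gcd_self] at this
    omega
  -- but d₁ = √t ≥ √2 > 1
  have : Real.sqrt t = 1 := by rw [← heq.1, this]; norm_num
  have h2t : Real.sqrt 2 ≤ Real.sqrt t := Real.sqrt_le_sqrt (by exact_mod_cast ht)
  have : (1:ℝ) < Real.sqrt 2 := by
    rw [show (1:ℝ) = Real.sqrt 1 by simp]
    apply Real.sqrt_lt_sqrt <;> norm_num
  linarith
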